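/- Let Q be a finite quiver, θ : ℤ^{Q_0} → ℤ a stability, and X a nonzero representation of Q over ℂ with Harder–Narasimhan filtration 0 = X_0 ⊂ X_1 ⊂ ⋯ ⊂ X_r = X; write μ_k = μ(X_k/X_{k−1}). Then for every subrepresentation U ⊆ X and every k ∈ {1, …, r}, the inequality θ(dim U) ≤ θ(dim X_{k−1}) + μ_k · (dim U − dim X_{k−1}) holds in ℚ, where dim denotes total dimension and θ is applied to dimension vectors. Equivalently, the point (dim U, θ(dim U)) lies on or below the concave polygon with vertices (dim X_k, θ(dim X_k)), k = 0, …, r. -/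
import Mathlib


open scoped BigOperators

/-- A finite quiver. -/
structure FinQuiver where
  V : Type
  A : Type
  [fintypeV : Fintype V]
  [fintypeA : Fintype A]
  [decEqV : DecidableEq V]
  [decEqA : DecidableEq A]
  src : A → V
  tgt : A → V

attribute [instance] FinQuiver.fintypeV FinQuiver.fintypeA FinQuiver.decEqV FinQuiver.decEqA

/-- A finite-dimensional complex representation of a quiver. -/
structure QRep (Q : FinQuiver) where
  carrier : Q.V → Type
  [acg : ∀ i, AddCommGroup (carrier i)]
  [mod : ∀ i, Module ℂ (carrier i)]
  [fd : ∀ i, FiniteDimensional ℂ (carrier i)]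
  map : ∀ a : Q.A, carrier (Q.src a) →ₗ[ℂ] carrier (Q.tgt a)

attribute [instance] QRep.acg QRep.mod QRep.fd

namespace QRep

variable {Q : FinQuiver}

/-- A family of subspaces of a representation. -/
abbrev SubFam (X : QRep Q) := ∀ i, Submodule ℂ (X.carrier i)

/-- The family of subspaces is a subrepresentation: it is stable under all structure maps. -/
def IsSubRep (X : QRep Q) (V : X.SubFam) : Prop :=
  ∀ a : Q.A, ∀ x ∈ V (Q.src a), X.map a x ∈ V (Q.tgt a)

/-- Dimension vector (with values in `ℤ`) of a family of subspaces. -/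
noncomputable def dimZ {X : QRep Q} (V : X.SubFam) : Q.V → ℤ :=
  fun i => (Module.finrank ℂ (V i) : ℤ)

/-- Dimension vector (with values in `ℤ`) of a representation. -/
noncomputable def dimVecZ (X : QRep Q) : Q.V → ℤ :=
  fun i => (Module.finrank ℂ (X.carrier i) : ℤ)

/-- The slope of a dimension vector with respect to a stability `θ`. -/
noncomputable def slope (θ : (Q.V → ℤ) →+ ℤ) (d : Q.V → ℤ) : ℚ :=
  (θ d : ℚ) / ((∑ i, d i : ℤ) : ℚ)

/-- A representation is semistable when every nonzero subrepresentation has slope at most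
the slope of the representation. -/
def Semistable (θ : (Q.V → ℤ) →+ ℤ) (X : QRep Q) : Prop :=
  ∀ V : X.SubFam, X.IsSubRep V → V ≠ ⊥ → slope θ (dimZ V) ≤ slope θ X.dimVecZ

/-- Cast along an equality of vertices. -/
def castEquiv (X : QRep Q) {i j : Q.V} (h : i = j) : X.carrier i ≃ₗ[ℂ] X.carrier j := by
  subst h; exact LinearEquiv.refl ℂ _

end QRep

/-- An involution of a quiver. -/
structure QInv (Q : FinQuiver) where
  onV : Q.V → Q.V
  onA : Q.A → Q.A
  invV : ∀ i, onV (onV i) = i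
  invA : ∀ a, onA (onA a) = a
  src_onA : ∀ a, Q.src (onA a) = onV (Q.tgt a)
  tgt_onA : ∀ a, Q.tgt (onA a) = onV (Q.src a)
  fix_onA : ∀ a, Q.tgt a = onV (Q.src a) → onA a = a

/-- A duality structure on a quiver with involution. -/
structure Duality (Q : FinQuiver) (σ : QInv Q) where
  s : Q.V → ℤ
  τ : Q.A → ℤ
  s_pm : ∀ i, s i = 1 ∨ s i = -1
  τ_pm : ∀ a, τ a = 1 ∨ τ a = -1
  s_inv : ∀ i, s (σ.onV i) = s i
  ττ : ∀ a, τ a * τ (σ.onA a) = s (Q.src a) * s (Q.tgt a)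

namespace QRep

variable {Q : FinQuiver}

/-- A stability is σ-compatible if `θ ∘ σ = -θ`. -/
def SigmaCompatible (σ : QInv Q) (θ : (Q.V → ℤ) →+ ℤ) : Prop :=
  ∀ d : Q.V → ℤ, θ (fun i => d (σ.onV i)) = - θ d

/-- The dual representation `S(U)`, with `S(U)_i = (U_{σ(i)})^*` and
`S(u)_α = τ_α ⬝ (u_{σ(α)})^∨`. -/
noncomputable def dualRep (σ : QInv Q) (D : Duality Q σ) (X : QRep Q) : QRep Q where
  carrier := fun i => Module.Dual ℂ (X.carrier (σ.onV i))
  map := fun a => (D.τ a : ℂ) •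
    (((X.castEquiv (σ.src_onA a)).dualMap.symm.toLinearMap).comp
      (((X.map (σ.onA a)).dualMap).comp
        ((X.castEquiv (σ.tgt_onA a)).dualMap.toLinearMap)))

end QRep

namespace QRep

variable {Q : FinQuiver}

/-- Semistability of the subquotient `W/V` of a representation `X` (for `V ≤ W`):
every subrepresentation `Y` with `V ≤ Y ≤ W`, `Y ≠ V`, satisfies
`μ(Y/V) ≤ μ(W/V)`.  (Subrepresentations of `W/V` correspond to such `Y`.) -/
def SubquotSemistable (θ : (Q.V → ℤ) →+ ℤ) (X : QRep Q) (V W : X.SubFam) : Prop :=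
  ∀ Y : X.SubFam, X.IsSubRep Y → V ≤ Y → Y ≤ W → Y ≠ V →
    slope θ (dimZ Y - dimZ V) ≤ slope θ (dimZ W - dimZ V)

/-- The slope of the `k`-th subquotient of a filtration. -/
noncomputable def stepSlope (θ : (Q.V → ℤ) →+ ℤ) {X : QRep Q} (r : ℕ)
    (U : Fin (r+1) → X.SubFam) (k : Fin r) : ℚ :=
  slope θ (dimZ (U k.succ) - dimZ (U k.castSucc))

/-- `F` is the Harder–Narasimhan filtration `0 = X_0 ⊂ X_1 ⊂ ⋯ ⊂ X_r = X`:
a filtration with semistable subquotients of strictly decreasing slopes. -/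
def IsHN (θ : (Q.V → ℤ) →+ ℤ) (X : QRep Q) (r : ℕ) (F : Fin (r+1) → X.SubFam) : Prop :=
  (∀ k, X.IsSubRep (F k)) ∧
  (F 0 = ⊥) ∧
  (F (Fin.last r) = ⊤) ∧
  (∀ k : Fin r, F k.castSucc ≤ F k.succ) ∧
  (∀ k : Fin r, F k.castSucc ≠ F k.succ) ∧
  (∀ k : Fin r, SubquotSemistable θ X (F k.castSucc) (F k.succ)) ∧
  (∀ k l : Fin r, k < l → stepSlope θ r F l < stepSlope θ r F k)

end QRep


section AuxHN

open QRep Module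

variable {Q : FinQuiver}

lemma auxHN_inf_dim {M : Type} [AddCommGroup M] [Module ℂ M] [FiniteDimensional ℂ M]
    (A V W : Submodule ℂ M) (hVW : V ≤ W) :
    finrank ℂ (A ⊓ W : Submodule ℂ M) + finrank ℂ V
      ≤ finrank ℂ (A ⊓ V : Submodule ℂ M) + finrank ℂ W := by
  have h := Submodule.finrank_sup_add_finrank_inf_eq (A ⊓ W) V
  have h2 : (A ⊓ W) ⊓ V = A ⊓ V := by rw [inf_assoc, inf_eq_right.mpr hVW]
  rw [h2] at h
  have h3 : finrank ℂ ((A ⊓ W) ⊔ V : Submodule ℂ M) ≤ finrank ℂ W :=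
    Submodule.finrank_mono (sup_le inf_le_right hVW)
  omega

lemma auxHN_isSubRep_inf {X : QRep Q} {U V : X.SubFam} (hU : X.IsSubRep U)
    (hV : X.IsSubRep V) : X.IsSubRep (fun i => U i ⊓ V i) :=
  fun a x hx => ⟨hU a x hx.1, hV a x hx.2⟩

lemma auxHN_isSubRep_sup {X : QRep Q} {U V : X.SubFam} (hU : X.IsSubRep U)
    (hV : X.IsSubRep V) : X.IsSubRep (fun i => U i ⊔ V i) := by
  intro a x hx
  rcases Submodule.mem_sup.mp hx with ⟨u, hu, v, hv, rfl⟩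
  rw [map_add]
  exact Submodule.add_mem_sup (hU a u hu) (hV a v hv)

end AuxHN

/-- Let `X` be a nonzero representation of a finite quiver `Q` with
Harder–Narasimhan filtration `0 = X_0 ⊂ X_1 ⊂ ⋯ ⊂ X_r = X` and `μ_k = μ(X_k/X_{k-1})`.
Then for every subrepresentation `U ⊆ X` and every `k ∈ {1, …, r}` one has
`θ(dim U) ≤ θ(dim X_{k-1}) + μ_k (dim U - dim X_{k-1})` in `ℚ`, i.e. the point
`(dim U, θ(dim U))` lies on or below the polygon of the HN filtration. -/
theorem point_below_HN_polygon (Q : FinQuiver) (θ : (Q.V → ℤ) →+ ℤ)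
    (X : QRep Q) (hX : X.dimVecZ ≠ 0)
    (r : ℕ) (F : Fin (r+1) → X.SubFam) (hHN : QRep.IsHN θ X r F)
    (U : X.SubFam) (hU : X.IsSubRep U) (k : Fin r) :
    (θ (QRep.dimZ U) : ℚ) ≤ (θ (QRep.dimZ (F k.castSucc)) : ℚ)
      + QRep.stepSlope θ r F k *
        ((∑ i, (QRep.dimZ U i : ℚ)) - ∑ i, (QRep.dimZ (F k.castSucc) i : ℚ)) := by
  classical
  obtain ⟨hsub, hF0, hFlast, hmono, hne, hss, hdec⟩ := hHN
  set V : Fin (r+1) → X.SubFam := fun j i => U i ⊓ F j i with hVdef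
  have hFnlt : ∀ n : ℕ, min n r < r + 1 := fun n => by omega
  set Fn : ℕ → Fin (r+1) := fun n => ⟨min n r, hFnlt n⟩ with hFndef
  set gU : ℕ → ℚ := fun n => ((θ (QRep.dimZ (V (Fn n))) : ℤ) : ℚ) with hgU
  set eU : ℕ → ℚ := fun n => ∑ i, ((QRep.dimZ (V (Fn n)) i : ℚ)) with heU
  set gF : ℕ → ℚ := fun n => ((θ (QRep.dimZ (F (Fn n))) : ℤ) : ℚ) with hgF
  set eF : ℕ → ℚ := fun n => ∑ i, ((QRep.dimZ (F (Fn n)) i : ℚ)) with heF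
  set μ : ℕ → ℚ := fun n => if h : n < r then QRep.stepSlope θ r F ⟨n, h⟩ else 0 with hμ
  have hFnsucc : ∀ {j : ℕ} (hj : j < r), Fn (j+1) = (⟨j, hj⟩ : Fin r).succ := by
    intro j hj
    apply Fin.ext
    simp [hFndef, Fin.val_succ]
    omega
  have hFncast : ∀ {j : ℕ} (hj : j < r), Fn j = (⟨j, hj⟩ : Fin r).castSucc := by
    intro j hj
    apply Fin.ext
    simp [hFndef]
    omega
  have hFnr : Fn r = Fin.last r := by
    apply Fin.ext
    simp [hFndef]
  have hFn0 : Fn 0 = 0 := by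
    apply Fin.ext
    simp [hFndef]
  have hVr : V (Fn r) = U := by
    funext i
    rw [hFnr]
    simp [hVdef, hFlast]
  have hdim0 : QRep.dimZ (V (Fn 0)) = 0 := by
    funext i
    rw [hFn0]
    simp [QRep.dimZ, hVdef, hF0]
  have hdimF0 : QRep.dimZ (F (Fn 0)) = 0 := by
    funext i
    rw [hFn0]
    simp [QRep.dimZ, hF0]
  have hgU0 : gU 0 = 0 := by simp [hgU, hdim0]
  have heU0 : eU 0 = 0 := by simp [heU, hdim0]
  have hgF0 : gF 0 = 0 := by simp [hgF, hdimF0]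
  have heF0 : eF 0 = 0 := by simp [heF, hdimF0]
  -- pointwise monotonicity facts
  have hdnn : ∀ (j : Fin r) (i : Q.V),
      QRep.dimZ (V j.castSucc) i ≤ QRep.dimZ (V j.succ) i := by
    intro j i
    have hle : V j.castSucc i ≤ V j.succ i := by
      simp only [hVdef]
      exact inf_le_inf_left _ (hmono j i)
    simp only [QRep.dimZ]
    exact_mod_cast Submodule.finrank_mono hle
  have hFdnn : ∀ (j : Fin r) (i : Q.V),
      QRep.dimZ (F j.castSucc) i ≤ QRep.dimZ (F j.succ) i := by
    intro j i
    simp only [QRep.dimZ]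
    exact_mod_cast Submodule.finrank_mono (hmono j i)
  have hstep_pt : ∀ (j : Fin r) (i : Q.V),
      QRep.dimZ (V j.succ) i - QRep.dimZ (V j.castSucc) i
        ≤ QRep.dimZ (F j.succ) i - QRep.dimZ (F j.castSucc) i := by
    intro j i
    have h : Module.finrank ℂ (V j.succ i) + Module.finrank ℂ (F j.castSucc i)
        ≤ Module.finrank ℂ (V j.castSucc i) + Module.finrank ℂ (F j.succ i) :=
      auxHN_inf_dim (U i) (F j.castSucc i) (F j.succ i) (hmono j i)
    show (Module.finrank ℂ (V j.succ i) : ℤ) - (Module.finrank ℂ (V j.castSucc i) : ℤ)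
        ≤ (Module.finrank ℂ (F j.succ i) : ℤ) - (Module.finrank ℂ (F j.castSucc i) : ℤ)
    omega
  have hFdpos : ∀ j : Fin r,
      (0:ℤ) < ∑ i, (QRep.dimZ (F j.succ) i - QRep.dimZ (F j.castSucc) i) := by
    intro j
    obtain ⟨i0, hne0⟩ := Function.ne_iff.mp (hne j)
    have hlt : F j.castSucc i0 < F j.succ i0 := lt_of_le_of_ne (hmono j i0) hne0
    have h1 : QRep.dimZ (F j.castSucc) i0 < QRep.dimZ (F j.succ) i0 := by
      simp only [QRep.dimZ]
      exact_mod_cast Submodule.finrank_lt_finrank_of_lt hlt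
    have h2 : ∀ i ∈ Finset.univ,
        (0:ℤ) ≤ QRep.dimZ (F j.succ) i - QRep.dimZ (F j.castSucc) i :=
      fun i _ => sub_nonneg.mpr (hFdnn j i)
    calc (0:ℤ) < QRep.dimZ (F j.succ) i0 - QRep.dimZ (F j.castSucc) i0 := by omega
    _ ≤ _ := Finset.single_le_sum h2 (Finset.mem_univ i0)
  -- step quantities
  have heFstep : ∀ {j : ℕ} (hj : j < r),
      eF (j+1) - eF j = ((∑ i, (QRep.dimZ (F (⟨j,hj⟩ : Fin r).succ) i
        - QRep.dimZ (F (⟨j,hj⟩ : Fin r).castSucc) i) : ℤ) : ℚ) := by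
    intro j hj
    simp only [heF, hFnsucc hj, hFncast hj]
    push_cast
    rw [Finset.sum_sub_distrib]
  have hgFstep : ∀ {j : ℕ} (hj : j < r),
      gF (j+1) - gF j = ((θ (QRep.dimZ (F (⟨j,hj⟩ : Fin r).succ)
        - QRep.dimZ (F (⟨j,hj⟩ : Fin r).castSucc)) : ℤ) : ℚ) := by
    intro j hj
    simp only [hgF, hFnsucc hj, hFncast hj, map_sub]
    push_cast
    ring
  have hmue : ∀ {j : ℕ} (hj : j < r),
      μ j * (eF (j+1) - eF j) = gF (j+1) - gF j := by
    intro j hj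
    have hepos : (0:ℚ) < ((∑ i, (QRep.dimZ (F (⟨j,hj⟩ : Fin r).succ) i
        - QRep.dimZ (F (⟨j,hj⟩ : Fin r).castSucc) i) : ℤ) : ℚ) := by
      exact_mod_cast hFdpos ⟨j, hj⟩
    rw [heFstep hj, hgFstep hj, hμ]
    simp only [hj, dif_pos]
    simp only [QRep.stepSlope, QRep.slope, Pi.sub_apply]
    rw [div_mul_cancel₀]
    intro h0
    rw [h0] at hepos
    exact lt_irrefl _ hepos
  have hmnn : ∀ {j : ℕ} (hj : j < r), (0:ℚ) ≤ eU (j+1) - eU j := by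
    intro j hj
    simp only [heU, hFnsucc hj, hFncast hj]
    rw [sub_nonneg]
    apply Finset.sum_le_sum
    intro i _
    exact_mod_cast hdnn ⟨j, hj⟩ i
  have hme : ∀ {j : ℕ} (hj : j < r), eU (j+1) - eU j ≤ eF (j+1) - eF j := by
    intro j hj
    rw [heFstep hj]
    have hL : eU (j+1) - eU j
        = ∑ i, ((QRep.dimZ (V (⟨j,hj⟩ : Fin r).succ) i : ℚ)
            - (QRep.dimZ (V (⟨j,hj⟩ : Fin r).castSucc) i : ℚ)) := by
      simp only [heU, hFnsucc hj, hFncast hj]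
      rw [Finset.sum_sub_distrib]
    rw [hL]
    push_cast
    apply Finset.sum_le_sum
    intro i _
    have := hstep_pt ⟨j, hj⟩ i
    push_cast
    exact_mod_cast this
  -- main step inequality
  have hstep : ∀ {j : ℕ} (hj : j < r),
      gU (j+1) - gU j ≤ μ j * (eU (j+1) - eU j) := by
    intro j hj
    set d : Q.V → ℤ := fun i =>
      QRep.dimZ (V (⟨j,hj⟩ : Fin r).succ) i - QRep.dimZ (V (⟨j,hj⟩ : Fin r).castSucc) i
      with hd
    have hdfun : d = QRep.dimZ (V (⟨j,hj⟩ : Fin r).succ)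
        - QRep.dimZ (V (⟨j,hj⟩ : Fin r).castSucc) := rfl
    have hgt : gU (j+1) - gU j = ((θ d : ℤ) : ℚ) := by
      simp only [hgU, hFnsucc hj, hFncast hj, hdfun, map_sub]
      push_cast
      ring
    have hmt : eU (j+1) - eU j = ((∑ i, d i : ℤ) : ℚ) := by
      simp only [heU, hFnsucc hj, hFncast hj, hd]
      push_cast
      rw [Finset.sum_sub_distrib]
    have hdnn' : ∀ i, 0 ≤ d i := fun i => sub_nonneg.mpr (hdnn ⟨j,hj⟩ i)
    by_cases hm : (∑ i, d i) = 0
    · have hall : ∀ i ∈ Finset.univ, d i = 0 :=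
        (Finset.sum_eq_zero_iff_of_nonneg (fun i _ => hdnn' i)).mp hm
      have hd0 : d = 0 := funext fun i => hall i (Finset.mem_univ i)
      rw [hgt, hmt, hm, hd0]
      simp
    · have hmpos : (0:ℤ) < ∑ i, d i :=
        lt_of_le_of_ne (Finset.sum_nonneg fun i _ => hdnn' i) (Ne.symm hm)
      set Y : X.SubFam := fun i =>
        (U i ⊓ F (⟨j,hj⟩ : Fin r).succ i) ⊔ F (⟨j,hj⟩ : Fin r).castSucc i with hY
      have hYdim : ∀ i, QRep.dimZ Y i - QRep.dimZ (F (⟨j,hj⟩ : Fin r).castSucc) i = d i := by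
        intro i
        have h := Submodule.finrank_sup_add_finrank_inf_eq
          (U i ⊓ F (⟨j,hj⟩ : Fin r).succ i) (F (⟨j,hj⟩ : Fin r).castSucc i)
        have h2 : (U i ⊓ F (⟨j,hj⟩ : Fin r).succ i) ⊓ F (⟨j,hj⟩ : Fin r).castSucc i
            = U i ⊓ F (⟨j,hj⟩ : Fin r).castSucc i := by
          rw [inf_assoc, inf_eq_right.mpr (hmono ⟨j,hj⟩ i)]
        rw [h2] at h
        have h3 : Module.finrank ℂ (Y i)
              + Module.finrank ℂ (V (⟨j,hj⟩ : Fin r).castSucc i)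
            = Module.finrank ℂ (V (⟨j,hj⟩ : Fin r).succ i)
              + Module.finrank ℂ (F (⟨j,hj⟩ : Fin r).castSucc i) := h
        show (Module.finrank ℂ (Y i) : ℤ)
            - (Module.finrank ℂ (F (⟨j,hj⟩ : Fin r).castSucc i) : ℤ)
          = (Module.finrank ℂ (V (⟨j,hj⟩ : Fin r).succ i) : ℤ)
            - (Module.finrank ℂ (V (⟨j,hj⟩ : Fin r).castSucc i) : ℤ)
        omega
      have hYsub : X.IsSubRep Y :=
        auxHN_isSubRep_sup (auxHN_isSubRep_inf hU (hsub _)) (hsub _)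
      have hle1 : F (⟨j,hj⟩ : Fin r).castSucc ≤ Y := fun i => le_sup_right
      have hle2 : Y ≤ F (⟨j,hj⟩ : Fin r).succ := fun i =>
        sup_le inf_le_right (hmono ⟨j,hj⟩ i)
      have hYne : Y ≠ F (⟨j,hj⟩ : Fin r).castSucc := by
        intro hEq
        apply hm
        apply Finset.sum_eq_zero
        intro i _
        have h := hYdim i
        rw [hEq] at h
        omega
      have hs := hss ⟨j,hj⟩ Y hYsub hle1 hle2 hYne
      have hdYeq : QRep.dimZ Y - QRep.dimZ (F (⟨j,hj⟩ : Fin r).castSucc) = d :=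
        funext fun i => hYdim i
      rw [hdYeq] at hs
      have hmq : (0:ℚ) < ((∑ i, d i : ℤ) : ℚ) := by exact_mod_cast hmpos
      rw [hgt, hmt, hμ]
      simp only [hj, dif_pos]
      simp only [QRep.slope, QRep.stepSlope] at hs ⊢
      rw [div_le_iff₀ hmq] at hs
      exact hs
  -- slope monotonicity
  have hkr : (k : ℕ) < r := k.isLt
  have hmono_mu_le : ∀ {j : ℕ} (hj : j < r), j ≤ (k : ℕ) → μ (k : ℕ) ≤ μ j := by
    intro j hj hjk
    rcases eq_or_lt_of_le hjk with h | h
    · rw [h]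
    · have hlt : (⟨j, hj⟩ : Fin r) < k := by
        rw [Fin.lt_def]
        exact h
      have := hdec ⟨j, hj⟩ k hlt
      rw [hμ]
      simp only [hj, hkr, dif_pos]
      have hkk : (⟨(k : ℕ), hkr⟩ : Fin r) = k := by
        apply Fin.ext
        rfl
      rw [hkk]
      exact le_of_lt this
  have hmono_mu_ge : ∀ {j : ℕ} (hj : j < r), (k : ℕ) ≤ j → μ j ≤ μ (k : ℕ) := by
    intro j hj hjk
    rcases eq_or_lt_of_le hjk with h | h
    · rw [h]
    · have hlt : k < (⟨j, hj⟩ : Fin r) := by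
        rw [Fin.lt_def]
        exact h
      have := hdec k ⟨j, hj⟩ hlt
      rw [hμ]
      simp only [hj, hkr, dif_pos]
      have hkk : (⟨(k : ℕ), hkr⟩ : Fin r) = k := by
        apply Fin.ext
        rfl
      rw [hkk]
      exact le_of_lt this
  -- telescoping
  have TgU : gU r = ∑ j ∈ Finset.range r, (gU (j+1) - gU j) := by
    rw [Finset.sum_range_sub, hgU0, sub_zero]
  have TeU : eU r = ∑ j ∈ Finset.range r, (eU (j+1) - eU j) := by
    rw [Finset.sum_range_sub, heU0, sub_zero]
  have TgF : gF (k : ℕ) = ∑ j ∈ Finset.range (k : ℕ), (gF (j+1) - gF j) := by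
    rw [Finset.sum_range_sub, hgF0, sub_zero]
  have TeF : eF (k : ℕ) = ∑ j ∈ Finset.range (k : ℕ), (eF (j+1) - eF j) := by
    rw [Finset.sum_range_sub, heF0, sub_zero]
  -- the key estimate
  have key : ∑ j ∈ Finset.range r, (gU (j+1) - gU j)
      ≤ ∑ j ∈ Finset.range r, (μ (k : ℕ) * (eU (j+1) - eU j)
          + (if j < (k : ℕ) then (μ j - μ (k : ℕ)) * (eF (j+1) - eF j) else 0)) := by
    apply Finset.sum_le_sum
    intro j hjmem
    have hj : j < r := Finset.mem_range.mp hjmem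
    have h3 := hstep hj
    by_cases hcase : j < (k : ℕ)
    · rw [if_pos hcase]
      have hmu := hmono_mu_le hj (le_of_lt hcase)
      have hprod : (μ j - μ (k : ℕ)) * (eU (j+1) - eU j)
          ≤ (μ j - μ (k : ℕ)) * (eF (j+1) - eF j) :=
        mul_le_mul_of_nonneg_left (hme hj) (sub_nonneg.mpr hmu)
      have hexp : μ j * (eU (j+1) - eU j)
          = μ (k : ℕ) * (eU (j+1) - eU j) + (μ j - μ (k : ℕ)) * (eU (j+1) - eU j) := by
        ring
      linarith
    · rw [if_neg hcase, add_zero]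
      have hmu := hmono_mu_ge hj (le_of_not_gt hcase)
      have hprod : μ j * (eU (j+1) - eU j) ≤ μ (k : ℕ) * (eU (j+1) - eU j) :=
        mul_le_mul_of_nonneg_right hmu (hmnn hj)
      linarith
  -- computing the right-hand sum
  have hsplit : ∑ j ∈ Finset.range r, (μ (k : ℕ) * (eU (j+1) - eU j)
          + (if j < (k : ℕ) then (μ j - μ (k : ℕ)) * (eF (j+1) - eF j) else 0))
      = μ (k : ℕ) * eU r + (gF (k : ℕ) - μ (k : ℕ) * eF (k : ℕ)) := by
    rw [Finset.sum_add_distrib, ← Finset.mul_sum, ← TeU]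
    congr 1
    have hsub1 : ∑ j ∈ Finset.range r,
        (if j < (k : ℕ) then (μ j - μ (k : ℕ)) * (eF (j+1) - eF j) else 0)
        = ∑ j ∈ Finset.range (k : ℕ),
        (if j < (k : ℕ) then (μ j - μ (k : ℕ)) * (eF (j+1) - eF j) else 0) := by
      symm
      apply Finset.sum_subset (Finset.range_subset_range.mpr (le_of_lt hkr))
      intro x _ hx
      rw [if_neg (fun hc => hx (Finset.mem_range.mpr hc))]
    rw [hsub1]
    have hsub2 : ∑ j ∈ Finset.range (k : ℕ),
        (if j < (k : ℕ) then (μ j - μ (k : ℕ)) * (eF (j+1) - eF j) else 0)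
        = ∑ j ∈ Finset.range (k : ℕ), ((gF (j+1) - gF j) - μ (k : ℕ) * (eF (j+1) - eF j)) := by
      apply Finset.sum_congr rfl
      intro j hjmem
      have hjk : j < (k : ℕ) := Finset.mem_range.mp hjmem
      have hj : j < r := lt_trans hjk hkr
      rw [if_pos hjk, sub_mul, hmue hj]
    rw [hsub2, Finset.sum_sub_distrib, ← Finset.mul_sum, ← TgF, ← TeF]
  -- put everything together
  have hgoalL : ((θ (QRep.dimZ U) : ℤ) : ℚ) = gU r := by
    rw [hgU]
    simp only
    rw [hVr]
  have hgoalF : ((θ (QRep.dimZ (F k.castSucc)) : ℤ) : ℚ) = gF (k : ℕ) := by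
    rw [hgF]
    simp only
    rw [hFncast hkr]
  have hgoaleU : (∑ i, (QRep.dimZ U i : ℚ)) = eU r := by
    rw [heU]
    simp only
    rw [hVr]
  have hgoaleF : (∑ i, (QRep.dimZ (F k.castSucc) i : ℚ)) = eF (k : ℕ) := by
    rw [heF]
    simp only
    rw [hFncast hkr]
  have hgoalmu : QRep.stepSlope θ r F k = μ (k : ℕ) := by
    rw [hμ]
    simp only [hkr, dif_pos]
  rw [hgoalL, hgoalF, hgoaleU, hgoaleF, hgoalmu, TgU]
  calc ∑ j ∈ Finset.range r, (gU (j+1) - gU j)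
      ≤ _ := key
    _ = μ (k : ℕ) * eU r + (gF (k : ℕ) - μ (k : ℕ) * eF (k : ℕ)) := hsplit
    _ = gF (k : ℕ) + μ (k : ℕ) * (eU r - eF (k : ℕ)) := by ring
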